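/- Let F ∈ 𝓒 be a contractive n×n matrix. Then ‖F‖₂² ≤ −log det(Id − F·F*). If in addition ‖F‖_∞² ≤ 1 − e^{−1}, then −log det(Id − F·F*) ≤ 2·‖F‖₂². -/

import Mathlib

open MeasureTheory Matrix Filter
open scoped Real ENNReal Topology ComplexOrder

noncomputable section

namespace NLFT

instance : MeasurableSpace Circle := borel Circle
instance : BorelSpace Circle := ⟨rfl⟩

/-- The Haar probability measure on the unit circle `𝕋`. -/
def μ : Measure Circle :=
  Measure.map AddCircle.toCircle (@AddCircle.haarAddCircle (2 * Real.pi) ⟨Real.two_pi_pos⟩)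

/-- `n × n` complex matrices. -/
abbrev Mat (n : ℕ) := Matrix (Fin n) (Fin n) ℂ

/-- `2n × 2n` complex matrices, written in `2 × 2` block form. -/
abbrev Mat2 (n : ℕ) := Matrix (Fin n ⊕ Fin n) (Fin n ⊕ Fin n) ℂ

/-- The Hilbert–Schmidt norm `‖·‖₂` of a matrix. -/
def hsNorm {ι κ : Type*} [Fintype ι] [Fintype κ] (M : Matrix ι κ ℂ) : ℝ :=
  Real.sqrt (∑ i, ∑ j, ‖M i j‖ ^ 2)

/-- The operator norm `‖·‖_∞` (largest singular value) of a matrix. -/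
def opNorm {ι : Type*} [Fintype ι] [DecidableEq ι] (M : Matrix ι ι ℂ) : ℝ :=
  ‖toEuclideanCLM (𝕜 := ℂ) M‖

/-- A matrix is contractive if its operator norm is `< 1`. -/
def Contractive {ι : Type*} [Fintype ι] [DecidableEq ι] (M : Matrix ι ι ℂ) : Prop :=
  opNorm M < 1

/-- Membership in `𝓖₀` (upper triangular, `a = 0`) or `𝓖₁` (lower triangular, `a = 1`):
triangular with strictly positive (real) diagonal entries. -/
def Triangular {n : ℕ} (a : Fin 2) (M : Mat n) : Prop :=
  (∀ i j : Fin n, (if a = 0 then j < i else i < j) → M i j = 0) ∧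
  ∀ i, 0 < (M i i).re ∧ (M i i).im = 0

/-- A square matrix is unitary. -/
def IsUnitary {ι : Type*} [Fintype ι] [DecidableEq ι] (M : Matrix ι ι ℂ) : Prop :=
  Mᴴ * M = 1

/-- A square matrix is special unitary. -/
def IsSU {ι : Type*} [Fintype ι] [DecidableEq ι] (M : Matrix ι ι ℂ) : Prop :=
  IsUnitary M ∧ M.det = 1

/-- Membership in `SU_α(2n)`. -/
def IsSUa {n : ℕ} (α : Fin 2 → Fin 2) (M : Mat2 n) : Prop :=
  IsSU M ∧ Triangular (α 0) M.toBlocks₁₁ ∧ Triangular (α 1) M.toBlocks₂₂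

/-- The `k`-th Fourier coefficient `X̂(k) = ∫_𝕋 X(z) z^{-k}` of a matrix-valued function,
computed entrywise. -/
def mFourierCoeff {ι κ : Type*} [Fintype ι] [Fintype κ] (X : Circle → Matrix ι κ ℂ) (k : ℤ) :
    Matrix ι κ ℂ :=
  Matrix.of fun i j => ∫ z : Circle, (z : ℂ) ^ (-k) * X z i j ∂μ

/-- All entries square integrable on the circle. -/
def MemL2 {ι κ : Type*} [Fintype ι] [Fintype κ] (X : Circle → Matrix ι κ ℂ) : Prop :=
  ∀ i j, MemLp (fun z => X z i j) 2 μ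

/-- Membership in the matrix Hardy space `H²(𝔻)` (boundary-value formulation). -/
def InH2 {ι κ : Type*} [Fintype ι] [Fintype κ] (X : Circle → Matrix ι κ ℂ) : Prop :=
  MemL2 X ∧ ∀ k : ℤ, k < 0 → mFourierCoeff X k = 0

/-- Membership in `H²(𝔻*)` (boundary-value formulation). -/
def InH2star {ι κ : Type*} [Fintype ι] [Fintype κ] (X : Circle → Matrix ι κ ℂ) : Prop :=
  MemL2 X ∧ ∀ k : ℤ, 0 < k → mFourierCoeff X k = 0

/-- The outerness condition `log |det X̂(0)| = ∫_𝕋 log |det X|`. -/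
def IsOuter {ι : Type*} [Fintype ι] [DecidableEq ι] (X : Circle → Matrix ι ι ℂ) : Prop :=
  Real.log (‖(mFourierCoeff X 0).det‖) =
    ∫ z : Circle, Real.log (‖(X z).det‖) ∂μ

/-- Pointwise conjugate transpose of a matrix-valued function. -/
def cT {ι κ : Type*} (X : Circle → Matrix ι κ ℂ) : Circle → Matrix κ ι ℂ :=
  fun z => (X z)ᴴ

/-- Entrywise a.e. measurability. -/
def AEMeas {ι κ : Type*} (X : Circle → Matrix ι κ ℂ) : Prop :=
  ∀ i j, AEMeasurable (fun z => X z i j) μ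

/-- A measurable matrix function `B : 𝕋 → 𝓒` is Szegő if `∫_𝕋 log det (Id - BB*) > -∞`,
i.e. the (a.e. nonpositive) function `log det (Id - BB*)` is integrable. -/
def Szego {n : ℕ} (B : Circle → Mat n) : Prop :=
  AEMeas B ∧ (∀ᵐ z ∂μ, Contractive (B z)) ∧
    Integrable (fun z => Real.log (‖(1 - B z * (B z)ᴴ).det‖)) μ

/-- Upper left `n × n` block of a `2n × 2n` matrix-valued function. -/
def blockA {n : ℕ} (M : Circle → Mat2 n) : Circle → Mat n := fun z => (M z).toBlocks₁₁

/-- Upper right block. -/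
def blockB {n : ℕ} (M : Circle → Mat2 n) : Circle → Mat n := fun z => (M z).toBlocks₁₂

/-- Lower left block. -/
def blockC {n : ℕ} (M : Circle → Mat2 n) : Circle → Mat n := fun z => (M z).toBlocks₂₁

/-- Lower right block. -/
def blockD {n : ℕ} (M : Circle → Mat2 n) : Circle → Mat n := fun z => (M z).toBlocks₂₂

/-- Membership in `𝐁_α`. -/
def MemB {n : ℕ} (α : Fin 2 → Fin 2) (M : Circle → Mat2 n) : Prop :=
  (∀ i j, AEMeasurable (fun z => M z i j) μ) ∧
  (∀ᵐ z ∂μ, IsSU (M z)) ∧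
  Szego (blockB M) ∧ Szego (blockC M) ∧
  InH2 (cT (blockA M)) ∧ IsOuter (cT (blockA M)) ∧
  InH2 (blockD M) ∧ IsOuter (blockD M) ∧
  Triangular (α 0) (mFourierCoeff (blockA M) 0) ∧
  Triangular (α 1) (mFourierCoeff (blockD M) 0)

open Classical in
/-- `Y_α(F)`: the unique element of `SU_α(2n)` with upper right block `F`. -/
def Yc {n : ℕ} (α : Fin 2 → Fin 2) (F : Mat n) : Mat2 n :=
  if h : ∃ M : Mat2 n, IsSUa α M ∧ M.toBlocks₁₂ = F then h.choose else 1

/-- The conjugation `Ad(w)` acting on `2n × 2n` block matrices. -/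
def Ad {n : ℕ} (w : ℂ) (M : Mat2 n) : Mat2 n :=
  Matrix.fromBlocks M.toBlocks₁₁ (w • M.toBlocks₁₂) (w⁻¹ • M.toBlocks₂₁) M.toBlocks₂₂

/-- The ordered product `∏_{j=c}^{d} Ad(z^j) Y_α(F_j)`. -/
def nlftOn {n : ℕ} (α : Fin 2 → Fin 2) (F : ℤ → Mat n) (c d : ℤ) (z : Circle) : Mat2 n :=
  (((Finset.Icc c d).sort (· ≤ ·)).map fun j => Ad ((z : ℂ) ^ j) (Yc α (F j))).prod

open Classical in
/-- A bound for the support of a finitely supported sequence. -/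
def suppBound {n : ℕ} (F : ℤ → Mat n) : ℕ :=
  if h : (Function.support F).Finite then h.toFinset.sup fun j => j.natAbs else 0

/-- The nonlinear Fourier transform `𝓕_α(F)` of a finitely supported sequence of
contractive matrices. -/
def nlft {n : ℕ} (α : Fin 2 → Fin 2) (F : ℤ → Mat n) (z : Circle) : Mat2 n :=
  nlftOn α F (-(suppBound F : ℤ)) (suppBound F : ℤ) z

/-- The metric `d` on matrix functions on the circle. -/
def metricD {n : ℕ} (M M' : Circle → Mat2 n) : ℝ :=
  Real.sqrt (∫ z : Circle, hsNorm (M z - M' z) ^ 2 ∂μ) +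
  |Real.log (‖(mFourierCoeff (blockA M) 0).det‖) -
    Real.log (‖(mFourierCoeff (blockA M') 0).det‖)|

/-- Membership in the space `𝐋_α`. -/
def MemL {n : ℕ} (α : Fin 2 → Fin 2) (M : Circle → Mat2 n) : Prop :=
  (∀ᵐ z ∂μ, IsSU (M z)) ∧
  MemL2 (blockA M) ∧ MemL2 (blockB M) ∧ MemL2 (blockC M) ∧ MemL2 (blockD M) ∧
  (∀ k : ℤ, 0 < k → mFourierCoeff (blockA M) k = 0) ∧
  (∀ k : ℤ, k < 0 → mFourierCoeff (blockD M) k = 0) ∧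
  Triangular (α 0) (mFourierCoeff (blockA M) 0) ∧
  Triangular (α 1) (mFourierCoeff (blockD M) 0)

/-- Properties (i) and (ii) in the definition of `𝐇_α⁺`. -/
def Hp12 {n : ℕ} (α : Fin 2 → Fin 2) (M : Circle → Mat2 n) : Prop :=
  InH2 (cT (blockA M)) ∧ InH2 (cT (blockC M)) ∧ InH2 (blockB M) ∧ InH2 (blockD M) ∧
  Triangular (α 0) (mFourierCoeff (blockA M) 0) ∧
  Triangular (α 1) (mFourierCoeff (blockD M) 0)

/-- Membership in the space `𝐇_α⁺`. -/
def MemHplus {n : ℕ} (α : Fin 2 → Fin 2) (M : Circle → Mat2 n) : Prop :=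
  (∀ᵐ z ∂μ, IsSU (M z)) ∧ Hp12 α M ∧
  ∀ (M' : Circle → Mat2 n) (I₁ I₂ : Circle → Mat n),
    (∀ᵐ z ∂μ, IsSU (M' z)) → Hp12 α M' →
    (∀ᵐ z ∂μ, IsUnitary (I₁ z)) → (∀ᵐ z ∂μ, IsUnitary (I₂ z)) →
    InH2 (cT I₁) → InH2 I₂ →
    (∀ᵐ z ∂μ, M z = M' z * Matrix.fromBlocks (I₁ z) 0 0 (I₂ z)) →
    (∀ᵐ z ∂μ, I₁ z = 1) ∧ (∀ᵐ z ∂μ, I₂ z = 1)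

/-- Membership in the space `𝐔_α⁺`: as `𝐇_α⁺` but with `U(2n)` in place of `SU(2n)`. -/
def MemUplus {n : ℕ} (α : Fin 2 → Fin 2) (M : Circle → Mat2 n) : Prop :=
  (∀ᵐ z ∂μ, IsUnitary (M z)) ∧ Hp12 α M ∧
  ∀ (M' : Circle → Mat2 n) (I₁ I₂ : Circle → Mat n),
    (∀ᵐ z ∂μ, IsUnitary (M' z)) → Hp12 α M' →
    (∀ᵐ z ∂μ, IsUnitary (I₁ z)) → (∀ᵐ z ∂μ, IsUnitary (I₂ z)) →
    InH2 (cT I₁) → InH2 I₂ →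
    (∀ᵐ z ∂μ, M z = M' z * Matrix.fromBlocks (I₁ z) 0 0 (I₂ z)) →
    (∀ᵐ z ∂μ, I₁ z = 1) ∧ (∀ᵐ z ∂μ, I₂ z = 1)

/-- Properties (i) and (ii) in the definition of `𝐇⁻_{α,0}`. -/
def Hm12 {n : ℕ} (α : Fin 2 → Fin 2) (M : Circle → Mat2 n) : Prop :=
  InH2 (cT (blockA M)) ∧ InH2 (blockD M) ∧
  MemL2 (blockB M) ∧ (∀ k : ℤ, 0 ≤ k → mFourierCoeff (blockB M) k = 0) ∧
  MemL2 (blockC M) ∧ (∀ k : ℤ, k ≤ 0 → mFourierCoeff (blockC M) k = 0) ∧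
  Triangular (α 0) (mFourierCoeff (blockA M) 0) ∧
  Triangular (α 1) (mFourierCoeff (blockD M) 0)

/-- Membership in the space `𝐇⁻_{α,0}`. -/
def MemHminus {n : ℕ} (α : Fin 2 → Fin 2) (M : Circle → Mat2 n) : Prop :=
  (∀ᵐ z ∂μ, IsSU (M z)) ∧ Hm12 α M ∧
  ∀ (M' : Circle → Mat2 n) (I₁ I₂ : Circle → Mat n),
    (∀ᵐ z ∂μ, IsSU (M' z)) → Hm12 α M' →
    (∀ᵐ z ∂μ, IsUnitary (I₁ z)) → (∀ᵐ z ∂μ, IsUnitary (I₂ z)) →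
    InH2 (cT I₁) → InH2 I₂ →
    (∀ᵐ z ∂μ, M z = Matrix.fromBlocks (I₁ z) 0 0 (I₂ z) * M' z) →
    (∀ᵐ z ∂μ, I₁ z = 1) ∧ (∀ᵐ z ∂μ, I₂ z = 1)

/-- Membership in `ℓ²(ℤ_{≥0}; 𝓒)`. -/
def L2Half {n : ℕ} (F : ℕ → Mat n) : Prop :=
  (∀ j, Contractive (F j)) ∧ Summable fun j => hsNorm (F j) ^ 2

/-- Membership in `ℓ²(ℤ; 𝓒)`. -/
def L2Z {n : ℕ} (F : ℤ → Mat n) : Prop :=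
  (∀ j, Contractive (F j)) ∧ Summable fun j => hsNorm (F j) ^ 2

/-- The `ℓ²` distance between two sequences. -/
def distL2Half {n : ℕ} (F F' : ℕ → Mat n) : ℝ :=
  Real.sqrt (∑' j, hsNorm (F j - F' j) ^ 2)

/-- Extension of a one-sided sequence to `ℤ` by zero. -/
def extZ {n : ℕ} (F : ℕ → Mat n) : ℤ → Mat n :=
  fun j => if 0 ≤ j then F j.toNat else 0

/-- `Φ` is a continuous extension of the NLFT `𝓕_α` to `ℓ²(ℤ_{≥0}; 𝓒)`, mapping into
`(𝐋_α, d)`. -/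
def IsNLFTExtension {n : ℕ} (α : Fin 2 → Fin 2) (Φ : (ℕ → Mat n) → Circle → Mat2 n) : Prop :=
  (∀ F : ℕ → Mat n, (∀ j, Contractive (F j)) → (Function.support F).Finite →
      ∀ᵐ z ∂μ, Φ F z = nlft α (extZ F) z) ∧
  (∀ F, L2Half F → MemL α (Φ F)) ∧
  (∀ F, L2Half F → ∀ ε : ℝ, 0 < ε → ∃ δ : ℝ, 0 < δ ∧ ∀ F', L2Half F' →
      distL2Half F F' < δ → metricD (Φ F) (Φ F') < ε)

/-- The truncation of a two-sided sequence to `[-N, N]`. -/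
def truncZ {n : ℕ} (F : ℤ → Mat n) (N : ℕ) : ℤ → Mat n :=
  fun j => if j.natAbs ≤ N then F j else 0

/-- `𝓕_α(F) = M` for a two-sided square-summable sequence `F`, formulated as convergence
in the metric `d` of the NLFTs of the truncations of `F`. -/
def NLFTeq {n : ℕ} (α : Fin 2 → Fin 2) (F : ℤ → Mat n) (M : Circle → Mat2 n) : Prop :=
  Tendsto (fun N : ℕ => metricD (nlft α (truncZ F N)) M) atTop (nhds 0)


set_option maxHeartbeats 1000000
set_option synthInstance.maxHeartbeats 1000000

private lemma aux_neg_log_le (x : ℝ) (h0 : 0 ≤ x) (h1 : x ≤ 1 - Real.exp (-1)) :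
    -Real.log (1 - x) ≤ 2 * x := by
  set c : ℝ := 1 - Real.exp (-1) with hc
  have hexp : Real.exp (-1) ≤ 1/2 := by
    have h2 : (2:ℝ) ≤ Real.exp 1 := by have := Real.add_one_le_exp 1; linarith
    rw [Real.exp_neg]
    rw [inv_le_comm₀ (Real.exp_pos 1) (by norm_num)]
    linarith
  have hcpos : (0:ℝ) < c := by
    have := Real.exp_pos (-1); rw [hc]; linarith
  have hconc := strictConcaveOn_log_Ioi.concaveOn
  have key := hconc.2 (Set.mem_Ioi.mpr (by norm_num : (0:ℝ) < 1))
    (Set.mem_Ioi.mpr (Real.exp_pos (-1)))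
    (show (0:ℝ) ≤ 1 - x/c by
      have : x/c ≤ 1 := (div_le_one hcpos).mpr h1
      linarith)
    (show (0:ℝ) ≤ x/c by positivity)
    (show (1 - x/c) + x/c = 1 by ring)
  have hx : (1 - x/c) • (1:ℝ) + (x/c) • Real.exp (-1) = 1 - x := by
    have : Real.exp (-1) = 1 - c := by rw [hc]; ring
    rw [this]
    simp only [smul_eq_mul]
    rw [mul_sub, div_mul_cancel₀ x hcpos.ne']
    ring
  rw [hx, Real.log_one, Real.log_exp] at key
  have : -(x/c) ≤ Real.log (1 - x) := by
    simpa using key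
  have hxc : x/c ≤ 2*x := by
    rw [div_le_iff₀ hcpos]
    nlinarith
  linarith

private lemma aux_eig_le (n : ℕ) (F : Mat n) (i : Fin n) :
    (Matrix.isHermitian_mul_conjTranspose_self F).eigenvalues i ≤ opNorm F ^ 2 := by
  set A := F * Fᴴ with hAdef
  have hA : A.IsHermitian := Matrix.isHermitian_mul_conjTranspose_self F
  have hPSD : A.PosSemidef := Matrix.posSemidef_self_mul_conjTranspose F
  set lam := hA.eigenvalues with hlam
  have h0 : 0 ≤ lam i := hPSD.eigenvalues_nonneg i
  set v : EuclideanSpace ℂ (Fin n) := hA.eigenvectorBasis i with hv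
  have hv1 : ‖v‖ = 1 := hA.eigenvectorBasis.orthonormal.1 i
  have hmv : A *ᵥ ⇑(hA.eigenvectorBasis i) = lam i • ⇑(hA.eigenvectorBasis i) :=
    hA.mulVec_eigenvectorBasis i
  have h1 : toEuclideanCLM (𝕜 := ℂ) A v = lam i • v := by
    apply (WithLp.equiv 2 _).injective
    simp only [WithLp.equiv_apply, ofLp_toEuclideanCLM]
    ext j
    have := congrFun hmv j
    simpa using this
  have h2 : ‖toEuclideanCLM (𝕜 := ℂ) A v‖ ≤ ‖toEuclideanCLM (𝕜 := ℂ) A‖ := by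
    calc ‖toEuclideanCLM (𝕜 := ℂ) A v‖ ≤ ‖toEuclideanCLM (𝕜 := ℂ) A‖ * ‖v‖ :=
          (toEuclideanCLM (𝕜 := ℂ) A).le_opNorm v
      _ = ‖toEuclideanCLM (𝕜 := ℂ) A‖ := by rw [hv1, mul_one]
  have h3 : ‖toEuclideanCLM (𝕜 := ℂ) A v‖ = lam i := by
    rw [h1, norm_smul, hv1, mul_one, Real.norm_eq_abs, abs_of_nonneg h0]
  have h4 : ‖toEuclideanCLM (𝕜 := ℂ) A‖ ≤ opNorm F ^ 2 := by
    have hstar : toEuclideanCLM (𝕜 := ℂ) (Fᴴ) = star (toEuclideanCLM (𝕜 := ℂ) F) :=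
      map_star _ F
    have : toEuclideanCLM (𝕜 := ℂ) A
        = toEuclideanCLM (𝕜 := ℂ) F * toEuclideanCLM (𝕜 := ℂ) (Fᴴ) := map_mul _ _ _
    rw [this, hstar]
    calc ‖toEuclideanCLM (𝕜 := ℂ) F * star (toEuclideanCLM (𝕜 := ℂ) F)‖
        ≤ ‖toEuclideanCLM (𝕜 := ℂ) F‖ * ‖star (toEuclideanCLM (𝕜 := ℂ) F)‖ := norm_mul_le _ _
      _ = opNorm F ^ 2 := by
          have hns : ‖star (toEuclideanCLM (𝕜 := ℂ) F)‖ = ‖toEuclideanCLM (𝕜 := ℂ) F‖ :=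
            by rw [ContinuousLinearMap.star_eq_adjoint]
               exact ContinuousLinearMap.adjoint.norm_map _
          rw [hns, sq]; rfl
  linarith [h3 ▸ h2]

private lemma aux_det_eq (n : ℕ) (F : Mat n) :
    (1 - F * Fᴴ).det
      = ∏ i, (1 - ((Matrix.isHermitian_mul_conjTranspose_self F).eigenvalues i : ℂ)) := by
  have hA : (F * Fᴴ).IsHermitian := Matrix.isHermitian_mul_conjTranspose_self F
  have hspec := hA.spectral_theorem
  rw [Unitary.conjStarAlgAut_apply] at hspec
  set U : Mat n := (hA.eigenvectorUnitary : Mat n) with hU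
  have hUU : U * star U = 1 := Matrix.mem_unitaryGroup_iff.mp (hA.eigenvectorUnitary).2
  have h1 : 1 - F * Fᴴ = U * (1 - Matrix.diagonal (RCLike.ofReal ∘ hA.eigenvalues)) * star U := by
    rw [mul_sub, sub_mul, mul_one, hUU, ← hspec]
  rw [h1, Matrix.det_mul, Matrix.det_mul, mul_comm, ← mul_assoc, ← Matrix.det_mul]
  have : star U * U = 1 := Matrix.mem_unitaryGroup_iff'.mp (hA.eigenvectorUnitary).2
  rw [this, Matrix.det_one, one_mul]
  have : (1 : Mat n) - Matrix.diagonal (RCLike.ofReal ∘ hA.eigenvalues)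
      = Matrix.diagonal (fun i => 1 - (hA.eigenvalues i : ℂ)) := by
    rw [← Matrix.diagonal_one, Matrix.diagonal_sub]
    rfl
  rw [this, Matrix.det_diagonal]

private lemma aux_hs_eq (n : ℕ) (F : Mat n) :
    hsNorm F ^ 2 = ∑ i, (Matrix.isHermitian_mul_conjTranspose_self F).eigenvalues i := by
  have hA : (F * Fᴴ).IsHermitian := Matrix.isHermitian_mul_conjTranspose_self F
  have h1 : hsNorm F ^ 2 = ∑ i, ∑ j, ‖F i j‖ ^ 2 := by
    rw [hsNorm, Real.sq_sqrt]
    positivity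
  have htr : (F * Fᴴ).trace = ∑ i, (hA.eigenvalues i : ℂ) := by
    have hUU : star (hA.eigenvectorUnitary : Mat n) * (hA.eigenvectorUnitary : Mat n) = 1 :=
      Matrix.mem_unitaryGroup_iff'.mp (hA.eigenvectorUnitary).2
    conv_lhs => rw [hA.spectral_theorem, Unitary.conjStarAlgAut_apply]
    rw [Matrix.trace_mul_cycle, hUU, one_mul, Matrix.trace_diagonal]
    simp
  have htr2 : (F * Fᴴ).trace = ∑ i, ∑ j, (‖F i j‖ ^ 2 : ℂ) := by
    simp only [Matrix.trace, Matrix.diag, Matrix.mul_apply, Matrix.conjTranspose_apply]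
    congr 1; ext i; congr 1; ext j
    rw [mul_comm]
    rw [show star (F i j) = (starRingEnd ℂ) (F i j) from rfl, mul_comm,
      Complex.mul_conj]
    rw [Complex.normSq_eq_norm_sq]
    push_cast
    ring
  rw [h1]
  have := htr2.symm.trans htr
  have := congrArg Complex.re this
  norm_num [← Complex.ofReal_pow] at this ⊢
  exact this

/-- Comparison of the squared Hilbert–Schmidt norm with `-log det (Id - F F*)` for
contractive matrices. -/
theorem statement_13 (n : ℕ) (hn : 1 ≤ n) (F : Mat n) (hF : Contractive F) :
    hsNorm F ^ 2 ≤ -Real.log (‖(1 - F * Fᴴ).det‖) ∧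
    (opNorm F ^ 2 ≤ 1 - Real.exp (-1) →
      -Real.log (‖(1 - F * Fᴴ).det‖) ≤ 2 * hsNorm F ^ 2) := by
  classical
  have hA : (F * Fᴴ).IsHermitian := Matrix.isHermitian_mul_conjTranspose_self F
  have hF' : opNorm F < 1 := hF
  have hop0 : (0:ℝ) ≤ opNorm F := norm_nonneg _
  have hop1 : opNorm F ^ 2 < 1 := by nlinarith
  set lam := hA.eigenvalues with hlamdef
  have hlam0 : ∀ i, 0 ≤ lam i := fun i =>
    (Matrix.posSemidef_self_mul_conjTranspose F).eigenvalues_nonneg i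
  have hlam_le : ∀ i, lam i ≤ opNorm F ^ 2 := fun i => aux_eig_le n F i
  have hlam1 : ∀ i, lam i < 1 := fun i => lt_of_le_of_lt (hlam_le i) hop1
  have habs : ‖(1 - F * Fᴴ).det‖ = ∏ i, (1 - lam i) := by
    rw [aux_det_eq n F, norm_prod]
    refine Finset.prod_congr rfl fun i _ => ?_
    rw [show (1 : ℂ) - ((lam i : ℝ) : ℂ) = (((1 - lam i : ℝ)) : ℂ) by push_cast; ring,
      Complex.norm_of_nonneg (by linarith [hlam1 i])]
  have hlog : Real.log (‖(1 - F * Fᴴ).det‖) = ∑ i, Real.log (1 - lam i) := by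
    rw [habs]
    exact Real.log_prod fun i _ => ne_of_gt (by linarith [hlam1 i])
  have hhs : hsNorm F ^ 2 = ∑ i, lam i := aux_hs_eq n F
  constructor
  · rw [hhs, hlog, ← Finset.sum_neg_distrib]
    refine Finset.sum_le_sum fun i _ => ?_
    have := Real.log_le_sub_one_of_pos (show (0:ℝ) < 1 - lam i by linarith [hlam1 i])
    linarith
  · intro hsmall
    rw [hhs, hlog, ← Finset.sum_neg_distrib, Finset.mul_sum]
    refine Finset.sum_le_sum fun i _ => ?_
    exact aux_neg_log_le (lam i) (hlam0 i) (le_trans (hlam_le i) hsmall)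

end NLFT
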